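/- Left-partial couplings compose along bind: if there is an R-left-partial coupling of μ₁ ∈ D(A) and μ₂ ∈ D(B), and for all (a,b) ∈ R there is an S-left-partial coupling of f₁(a) and f₂(b), then there is an S-left-partial coupling of mbind(f₁, μ₁) and mbind(f₂, μ₂). -/

import Mathlib

open scoped ENNReal Classical

/-- Dirac point mass sub-distribution. -/
noncomputable def mret {A : Type*} (a : A) : A → ℝ≥0∞ :=
  fun a' => if a' = a then 1 else 0

/-- Monadic bind of sub-distributions: `mbind f μ b = Σ_a μ(a) · f(a)(b)`. -/
noncomputable def mbind {A B : Type*} (f : A → B → ℝ≥0∞) (μ : A → ℝ≥0∞) : B → ℝ≥0∞ :=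
  fun b => ∑' a, μ a * f a b

/-- A sub-distribution: total mass at most 1. -/
def IsSubPMF {A : Type*} (μ : A → ℝ≥0∞) : Prop := ∑' a, μ a ≤ 1

/-- `μ` is a coupling of `μ₁` and `μ₂`: its marginals are `μ₁` and `μ₂`. -/
def IsCoupling {A B : Type*} (μ : A × B → ℝ≥0∞) (μ₁ : A → ℝ≥0∞) (μ₂ : B → ℝ≥0∞) : Prop :=
  (∀ a, ∑' b, μ (a, b) = μ₁ a) ∧ (∀ b, ∑' a, μ (a, b) = μ₂ b)

/-- Existence of an `R`-coupling. -/
def Rcoupl {A B : Type*} (μ₁ : A → ℝ≥0∞) (μ₂ : B → ℝ≥0∞) (R : A → B → Prop) : Prop :=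
  ∃ μ : A × B → ℝ≥0∞, IsCoupling μ μ₁ μ₂ ∧ ∀ p, 0 < μ p → R p.1 p.2

/-- `μ` is a left-partial coupling of `μ₁` and `μ₂`: left marginal equals `μ₁`,
right marginal is pointwise at most `μ₂`. -/
def IsLPCoupling {A B : Type*} (μ : A × B → ℝ≥0∞) (μ₁ : A → ℝ≥0∞) (μ₂ : B → ℝ≥0∞) : Prop :=
  (∀ a, ∑' b, μ (a, b) = μ₁ a) ∧ (∀ b, ∑' a, μ (a, b) ≤ μ₂ b)

/-- Existence of an `R`-left-partial coupling. -/
def refRcoupl {A B : Type*} (μ₁ : A → ℝ≥0∞) (μ₂ : B → ℝ≥0∞) (R : A → B → Prop) : Prop :=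
  ∃ μ : A × B → ℝ≥0∞, IsLPCoupling μ μ₁ μ₂ ∧ ∀ p, 0 < μ p → R p.1 p.2

/-- left-partial couplings compose along bind. -/
theorem refRcoupl_bind {A B A' B' : Type*} [Countable A] [Countable B] [Countable A'] [Countable B']
    (μ₁ : A → ℝ≥0∞) (μ₂ : B → ℝ≥0∞) (f₁ : A → A' → ℝ≥0∞) (f₂ : B → B' → ℝ≥0∞)
    (R : A → B → Prop) (S : A' → B' → Prop)
    (hμ₁ : IsSubPMF μ₁) (hμ₂ : IsSubPMF μ₂)
    (hf₁ : ∀ a, IsSubPMF (f₁ a)) (hf₂ : ∀ b, IsSubPMF (f₂ b))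
    (h : refRcoupl μ₁ μ₂ R) (hfs : ∀ a b, R a b → refRcoupl (f₁ a) (f₂ b) S) :
    refRcoupl (mbind f₁ μ₁) (mbind f₂ μ₂) S := by
  obtain ⟨μ, ⟨hμL, hμR⟩, hμS⟩ := h
  -- choose a coupling for each pair in R
  have hν : ∀ p : A × B, ∃ ν : A' × B' → ℝ≥0∞,
      (0 < μ p → IsLPCoupling ν (f₁ p.1) (f₂ p.2) ∧ ∀ q, 0 < ν q → S q.1 q.2) := by
    intro p
    by_cases hp : 0 < μ p
    · obtain ⟨ν, hν1, hν2⟩ := hfs p.1 p.2 (hμS p hp)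
      exact ⟨ν, fun _ => ⟨hν1, hν2⟩⟩
    · exact ⟨fun _ => 0, fun h => absurd h hp⟩
  choose ν hνspec using hν
  refine ⟨fun q => ∑' p : A × B, μ p * ν p q, ⟨?_, ?_⟩, ?_⟩
  · intro a'
    rw [ENNReal.tsum_comm]
    have : ∀ p : A × B, ∑' b', μ p * ν p (a', b') = μ p * f₁ p.1 a' := by
      intro p
      rw [ENNReal.tsum_mul_left]
      rcases eq_or_lt_of_le (zero_le : 0 ≤ μ p) with hp | hp
      · simp [← hp]
      · rw [((hνspec p hp).1).1 a']
    rw [tsum_congr this]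
    calc ∑' p : A × B, μ p * f₁ p.1 a'
        = ∑' a, ∑' b, μ (a, b) * f₁ a a' := ENNReal.tsum_prod (f := fun a b => μ (a, b) * f₁ a a')
      _ = mbind f₁ μ₁ a' := by
          simp only [mbind]
          refine tsum_congr fun a => ?_
          rw [← hμL a]
          exact ENNReal.tsum_mul_right
  · intro b'
    rw [ENNReal.tsum_comm]
    have : ∀ p : A × B, ∑' a', μ p * ν p (a', b') ≤ μ p * f₂ p.2 b' := by
      intro p
      rw [ENNReal.tsum_mul_left]
      rcases eq_or_lt_of_le (zero_le : 0 ≤ μ p) with hp | hp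
      · simp [← hp]
      · exact mul_le_mul_right (((hνspec p hp).1).2 b') _
    refine le_trans (Summable.tsum_le_tsum this ENNReal.summable ENNReal.summable) ?_
    calc ∑' p : A × B, μ p * f₂ p.2 b'
        = ∑' a, ∑' b, μ (a, b) * f₂ b b' := ENNReal.tsum_prod (f := fun a b => μ (a, b) * f₂ b b')
      _
        = ∑' b, (∑' a, μ (a, b)) * f₂ b b' := by
          rw [ENNReal.tsum_comm]
          exact tsum_congr fun b => by rw [ENNReal.tsum_mul_right]
      _ ≤ ∑' b, μ₂ b * f₂ b b' :=
          Summable.tsum_le_tsum (fun b => mul_le_mul_left (hμR b) _)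
            ENNReal.summable ENNReal.summable
      _ = mbind f₂ μ₂ b' := rfl
  · intro q hq
    obtain ⟨p, hp⟩ : ∃ p : A × B, 0 < μ p * ν p q := by
      by_contra hc
      push_neg at hc
      simp only [le_zero_iff] at hc
      simp [tsum_congr hc] at hq
    have hμp : 0 < μ p := by
      by_contra hc
      push_neg at hc
      simp [le_zero_iff.mp hc] at hp
    have hνq : 0 < ν p q := by
      by_contra hc
      push_neg at hc
      simp [le_zero_iff.mp hc] at hp
    exact (hνspec p hμp).2 q hνq
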